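/- The polynomial P_ℓ^{(ε)}(q,T) := ∑_{K ⊆ [1,ℓ−1]} w_{ℓ,K}(q) q^{−a_ℓ^{(ε)}(K)} T^{#K} satisfies the functional equation P_ℓ^{(ε)}(q^{−1}, T^{−1}) = T^{1−ℓ} q^{(1/3)ℓ(ℓ−1)(ℓ+(1−3ε)/4) − ℓ(ℓ−1)/2} · P_ℓ^{(ε)}(q,T). -/

import Mathlib

open scoped Classical

/-- The descent set of a permutation of `{1,…,ℓ}` (positions encoded by `Fin ℓ`). -/
noncomputable def descents (ℓ : ℕ) (π : Equiv.Perm (Fin ℓ)) : Finset ℕ :=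
  (Finset.Icc 1 (ℓ - 1)).filter fun i =>
    ∃ (h1 : i - 1 < ℓ) (h2 : i < ℓ), π ⟨i, h2⟩ < π ⟨i - 1, h1⟩

/-- The number of inversions of `π`. -/
noncomputable def invCount (ℓ : ℕ) (π : Equiv.Perm (Fin ℓ)) : ℕ :=
  (Finset.univ.filter fun p : Fin ℓ × Fin ℓ => p.1 < p.2 ∧ π p.2 < π p.1).card

/-- The descent polynomial `w_{ℓ,K}(q) = ∑_{π ∈ S_ℓ, D(π)=K} q^{inv(π)}`. -/
noncomputable def descPoly (ℓ : ℕ) (K : Finset ℕ) (q : ℚ) : ℚ :=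
  ∑ π ∈ Finset.univ.filter fun π : Equiv.Perm (Fin ℓ) => descents ℓ π = K,
    q ^ invCount ℓ π

/-- `a_ℓ^{(ε)}(K) := ∑_{i ∈ K} ( ℓ(ℓ−ε)/2 − i(i−ε)/2 )`, as an integer. -/
def aInt (ℓ : ℕ) (ε : ℤ) (K : Finset ℕ) : ℤ :=
  ∑ i ∈ K, ((ℓ : ℤ) * ((ℓ : ℤ) - ε) / 2 - (i : ℤ) * ((i : ℤ) - ε) / 2)

/-- `P_ℓ^{(ε)}(q,T) := ∑_{K ⊆ [1,ℓ−1]} w_{ℓ,K}(q) q^{−a_ℓ^{(ε)}(K)} T^{#K}`. -/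
noncomputable def Ppoly (ℓ : ℕ) (ε : ℤ) (q T : ℚ) : ℚ :=
  ∑ K ∈ (Finset.Icc 1 (ℓ - 1)).powerset,
    descPoly ℓ K q * q ^ (-(aInt ℓ ε K)) * T ^ K.card

/-! ### Auxiliary lemmas -/

/-- Number of strictly increasing pairs in `Fin ℓ × Fin ℓ`. -/
noncomputable def Nlt (ℓ : ℕ) : ℕ :=
  (Finset.univ.filter fun p : Fin ℓ × Fin ℓ => p.1 < p.2).card

lemma Nlt_eq (ℓ : ℕ) : Nlt ℓ = ℓ * (ℓ - 1) / 2 := by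
  have h : Nlt ℓ = ∑ j : Fin ℓ, ((Finset.univ.filter
      fun p : Fin ℓ × Fin ℓ => p.1 < p.2).filter fun p => p.2 = j).card :=
    Finset.card_eq_sum_card_fiberwise (fun x _ => Finset.mem_univ _)
  have h2 : ∀ j : Fin ℓ, ((Finset.univ.filter
      fun p : Fin ℓ × Fin ℓ => p.1 < p.2).filter fun p => p.2 = j).card = (j : ℕ) := by
    intro j
    rw [← Fin.card_Iio (b := j)]
    refine Finset.card_nbij' (i := fun p => p.1) (j := fun i => (i, j)) ?_ ?_ ?_ ?_
    · rintro ⟨a, b⟩ hp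
      simp only [Finset.mem_coe, Finset.mem_filter, Finset.mem_univ, true_and] at hp
      simp only [Finset.mem_coe, Finset.mem_Iio]
      exact hp.2 ▸ hp.1
    · intro i hi
      simp only [Finset.mem_coe, Finset.mem_Iio] at hi
      simp [hi]
    · rintro ⟨a, b⟩ hp
      simp only [Finset.mem_coe, Finset.mem_filter, Finset.mem_univ, true_and] at hp
      simp [hp.2]
    · intro i hi; rfl
  rw [h]
  simp only [h2]
  rw [Fin.sum_univ_eq_sum_range (fun i => i) ℓ, Finset.sum_range_id]

lemma invCount_rev_add (ℓ : ℕ) (π : Equiv.Perm (Fin ℓ)) :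
    invCount ℓ (Fin.revPerm * π) + invCount ℓ π = Nlt ℓ := by
  unfold invCount Nlt
  have h1 : (Finset.univ.filter fun p : Fin ℓ × Fin ℓ =>
      p.1 < p.2 ∧ (Fin.revPerm * π : Equiv.Perm (Fin ℓ)) p.2 < (Fin.revPerm * π : Equiv.Perm (Fin ℓ)) p.1)
      = (Finset.univ.filter fun p : Fin ℓ × Fin ℓ => p.1 < p.2).filter
        (fun p => ¬ π p.2 < π p.1) := by
    rw [Finset.filter_filter]
    apply Finset.filter_congr
    intro p _
    simp only [Equiv.Perm.mul_apply, Fin.revPerm_apply, Fin.rev_lt_rev]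
    constructor
    · rintro ⟨h, h'⟩; exact ⟨h, not_lt.2 h'.le⟩
    · rintro ⟨h, h'⟩
      exact ⟨h, lt_of_le_of_ne (not_lt.1 h') (fun hc => (ne_of_lt h) (π.injective hc))⟩
  have h2 : (Finset.univ.filter fun p : Fin ℓ × Fin ℓ =>
      p.1 < p.2 ∧ π p.2 < π p.1)
      = (Finset.univ.filter fun p : Fin ℓ × Fin ℓ => p.1 < p.2).filter
        (fun p => π p.2 < π p.1) := by
    rw [Finset.filter_filter]
  rw [h1, h2, add_comm]
  exact Finset.card_filter_add_card_filter_not _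

lemma descents_rev (ℓ : ℕ) (π : Equiv.Perm (Fin ℓ)) :
    descents ℓ (Fin.revPerm * π) = Finset.Icc 1 (ℓ - 1) \ descents ℓ π := by
  unfold descents
  rw [← Finset.filter_not]
  apply Finset.filter_congr
  intro i hi
  simp only [Finset.mem_Icc] at hi
  have h2 : i < ℓ := by omega
  have h1 : i - 1 < ℓ := by omega
  have hne : (⟨i - 1, h1⟩ : Fin ℓ) ≠ ⟨i, h2⟩ := by
    simp only [ne_eq, Fin.mk.injEq]; omega
  simp only [Equiv.Perm.mul_apply, Fin.revPerm_apply, Fin.rev_lt_rev]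
  constructor
  · rintro ⟨_, _, hlt⟩ ⟨_, _, hlt'⟩
    exact absurd (lt_trans hlt hlt') (lt_irrefl _)
  · intro hc
    refine ⟨h1, h2, ?_⟩
    by_contra hnl
    exact hc ⟨h1, h2, lt_of_le_of_ne (not_lt.1 hnl)
      (fun he => hne (π.injective he.symm))⟩

lemma revPerm_mul_revPerm_mul (ℓ : ℕ) (π : Equiv.Perm (Fin ℓ)) :
    Fin.revPerm * (Fin.revPerm * π) = π := by
  ext x
  simp [Equiv.Perm.mul_apply, Fin.rev_rev]

lemma descPoly_inv (ℓ : ℕ) (q : ℚ) (hq : q ≠ 0) (K : Finset ℕ)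
    (hK : K ⊆ Finset.Icc 1 (ℓ - 1)) :
    descPoly ℓ (Finset.Icc 1 (ℓ - 1) \ K) q⁻¹ = (q ^ Nlt ℓ)⁻¹ * descPoly ℓ K q := by
  unfold descPoly
  rw [Finset.mul_sum]
  refine Finset.sum_nbij' (i := fun π => Fin.revPerm * π) (j := fun π => Fin.revPerm * π)
    ?_ ?_ ?_ ?_ ?_
  · intro π hπ
    simp only [Finset.mem_filter, Finset.mem_univ, true_and] at hπ ⊢
    rw [descents_rev, hπ, Finset.sdiff_sdiff_eq_self hK]
  · intro π hπ
    simp only [Finset.mem_filter, Finset.mem_univ, true_and] at hπ ⊢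
    rw [descents_rev, hπ]
  · intro π _; exact revPerm_mul_revPerm_mul ℓ π
  · intro π _; exact revPerm_mul_revPerm_mul ℓ π
  · intro π hπ
    have hle : invCount ℓ π ≤ Nlt ℓ := by
      have := invCount_rev_add ℓ π; omega
    have hcount : invCount ℓ (Fin.revPerm * π) = Nlt ℓ - invCount ℓ π := by
      have := invCount_rev_add ℓ π; omega
    rw [hcount, pow_sub₀ q hq hle, ← mul_assoc, inv_mul_cancel₀ (pow_ne_zero _ hq), one_mul,
      inv_pow]

lemma two_dvd_aux (ε : ℤ) (hε : ε = 1 ∨ ε = -1) (n : ℤ) : 2 ∣ n * (n - ε) := by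
  rcases Int.even_or_odd n with ⟨k, hk⟩ | ⟨k, hk⟩
  · exact ⟨k * (n - ε), by rw [hk]; ring⟩
  · rcases hε with rfl | rfl
    · exact ⟨n * k, by rw [hk]; ring⟩
    · exact ⟨n * (k + 1), by rw [hk]; ring⟩

lemma cast_half (a : ℤ) (h : 2 ∣ a) : ((a / 2 : ℤ) : ℚ) = (a : ℚ) / 2 := by
  obtain ⟨c, rfl⟩ := h
  rw [Int.mul_ediv_cancel_left _ two_ne_zero]
  push_cast; ring

lemma aInt_cast (ℓ : ℕ) (ε : ℤ) (hε : ε = 1 ∨ ε = -1) (K : Finset ℕ) :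
    ((aInt ℓ ε K : ℤ) : ℚ)
      = ∑ i ∈ K, (((ℓ : ℚ) * ((ℓ : ℚ) - (ε : ℚ)) - (i : ℚ) * ((i : ℚ) - (ε : ℚ))) / 2) := by
  rw [aInt, Int.cast_sum]
  refine Finset.sum_congr rfl fun i _ => ?_
  rw [Int.cast_sub, cast_half _ (two_dvd_aux ε hε _), cast_half _ (two_dvd_aux ε hε _)]
  push_cast; ring

lemma sumQ (c : ℚ) (n : ℕ) :
    ∑ i ∈ Finset.range n, (i : ℚ) * ((i : ℚ) - c)
      = (n : ℚ) * ((n : ℚ) - 1) * (2 * (n : ℚ) - 1) / 6 - c * (n : ℚ) * ((n : ℚ) - 1) / 2 := by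
  induction n with
  | zero => simp
  | succ n ih =>
    rw [Finset.sum_range_succ, ih]
    push_cast; ring

lemma key_exponent (ℓ : ℕ) (hℓ : 2 ≤ ℓ) (ε : ℤ) (hε : ε = 1 ∨ ε = -1) (e : ℤ)
    (he : (e : ℚ) = (1 / 3 : ℚ) * (ℓ : ℚ) * ((ℓ : ℚ) - 1) * ((ℓ : ℚ) + (1 - 3 * (ε : ℚ)) / 4)
        - (ℓ : ℚ) * ((ℓ : ℚ) - 1) / 2) :
    aInt ℓ ε (Finset.Icc 1 (ℓ - 1)) = e + (Nlt ℓ : ℤ) := by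
  have hcastN : ((Nlt ℓ : ℕ) : ℚ) = (ℓ : ℚ) * ((ℓ : ℚ) - 1) / 2 := by
    rw [Nlt_eq]
    have hdvd : 2 ∣ ℓ * (ℓ - 1) := by
      have h := Nat.even_mul_succ_self (ℓ - 1)
      rw [show ℓ - 1 + 1 = ℓ by omega] at h
      obtain ⟨k, hk⟩ := h
      exact ⟨k, by rw [mul_comm]; omega⟩
    rw [Nat.cast_div hdvd (by norm_num)]
    have : ((ℓ * (ℓ - 1) : ℕ) : ℚ) = (ℓ : ℚ) * ((ℓ : ℚ) - 1) := by
      push_cast [Nat.cast_sub (by omega : 1 ≤ ℓ)]; ring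
    rw [this]; norm_num
  have main : ((aInt ℓ ε (Finset.Icc 1 (ℓ - 1)) : ℤ) : ℚ) = (e : ℚ) + ((Nlt ℓ : ℕ) : ℚ) := by
    rw [aInt_cast ℓ ε hε]
    have hIcc : Finset.Icc 1 (ℓ - 1) = Finset.Ico 1 ℓ := by
      rw [← Finset.Ico_add_one_right_eq_Icc]
      congr 1
      omega
    rw [hIcc]
    have hsplit : ∑ i ∈ Finset.range ℓ,
          (((ℓ : ℚ) * ((ℓ : ℚ) - (ε : ℚ)) - (i : ℚ) * ((i : ℚ) - (ε : ℚ))) / 2)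
        = (((ℓ : ℚ) * ((ℓ : ℚ) - (ε : ℚ))) - 0 * (0 - (ε : ℚ))) / 2
          + ∑ i ∈ Finset.Ico 1 ℓ,
            (((ℓ : ℚ) * ((ℓ : ℚ) - (ε : ℚ)) - (i : ℚ) * ((i : ℚ) - (ε : ℚ))) / 2) := by
      rw [Finset.range_eq_Ico, Finset.sum_eq_sum_Ico_succ_bot (by omega : 0 < ℓ)]
      norm_num
    have hrange : ∑ i ∈ Finset.range ℓ,
          (((ℓ : ℚ) * ((ℓ : ℚ) - (ε : ℚ)) - (i : ℚ) * ((i : ℚ) - (ε : ℚ))) / 2)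
        = ((ℓ : ℚ) * ((ℓ : ℚ) * ((ℓ : ℚ) - (ε : ℚ)))
            - ((ℓ : ℚ) * ((ℓ : ℚ) - 1) * (2 * (ℓ : ℚ) - 1) / 6
              - (ε : ℚ) * (ℓ : ℚ) * ((ℓ : ℚ) - 1) / 2)) / 2 := by
      rw [← Finset.sum_div, Finset.sum_sub_distrib, Finset.sum_const, Finset.card_range,
        nsmul_eq_mul, sumQ]
    have : ∑ i ∈ Finset.Ico 1 ℓ,
          (((ℓ : ℚ) * ((ℓ : ℚ) - (ε : ℚ)) - (i : ℚ) * ((i : ℚ) - (ε : ℚ))) / 2)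
        = ((ℓ : ℚ) * ((ℓ : ℚ) * ((ℓ : ℚ) - (ε : ℚ)))
            - ((ℓ : ℚ) * ((ℓ : ℚ) - 1) * (2 * (ℓ : ℚ) - 1) / 6
              - (ε : ℚ) * (ℓ : ℚ) * ((ℓ : ℚ) - 1) / 2)) / 2
          - ((ℓ : ℚ) * ((ℓ : ℚ) - (ε : ℚ))) / 2 := by
      have := hsplit
      rw [hrange] at this
      linarith [this]
    rw [this, he, hcastN]
    ring
  exact_mod_cast main

/-- Functional equation
`P_ℓ^{(ε)}(q⁻¹, T⁻¹) = T^{1−ℓ} q^{(1/3)ℓ(ℓ−1)(ℓ+(1−3ε)/4) − ℓ(ℓ−1)/2} · P_ℓ^{(ε)}(q,T)`. -/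
theorem Ppoly_functional_equation (ℓ : ℕ) (hℓ : 2 ≤ ℓ) (ε : ℤ) (hε : ε = 1 ∨ ε = -1)
    (q T : ℚ) (hq : q ≠ 0) (hT : T ≠ 0) (e : ℤ)
    (he : (e : ℚ) = (1 / 3 : ℚ) * (ℓ : ℚ) * ((ℓ : ℚ) - 1) * ((ℓ : ℚ) + (1 - 3 * (ε : ℚ)) / 4)
        - (ℓ : ℚ) * ((ℓ : ℚ) - 1) / 2) :
    Ppoly ℓ ε q⁻¹ T⁻¹ = T ^ (1 - (ℓ : ℤ)) * q ^ e * Ppoly ℓ ε q T := by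
  set S := Finset.Icc 1 (ℓ - 1) with hSdef
  have hkey : aInt ℓ ε S = e + (Nlt ℓ : ℤ) := key_exponent ℓ hℓ ε hε e he
  have hcardS : S.card = ℓ - 1 := by
    rw [hSdef, Nat.card_Icc]; omega
  have hre : Ppoly ℓ ε q⁻¹ T⁻¹ =
      ∑ K ∈ S.powerset,
        descPoly ℓ (S \ K) q⁻¹ * (q⁻¹) ^ (-(aInt ℓ ε (S \ K))) * (T⁻¹) ^ (S \ K).card := by
    rw [Ppoly]
    refine Finset.sum_nbij' (i := fun K => S \ K) (j := fun K => S \ K) ?_ ?_ ?_ ?_ ?_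
    · intro K hK
      simp only [Finset.mem_powerset] at hK ⊢
      exact Finset.sdiff_subset
    · intro K hK
      simp only [Finset.mem_powerset] at hK ⊢
      exact Finset.sdiff_subset
    · intro K hK
      simp only [Finset.mem_powerset] at hK
      exact Finset.sdiff_sdiff_eq_self hK
    · intro K hK
      simp only [Finset.mem_powerset] at hK
      exact Finset.sdiff_sdiff_eq_self hK
    · intro K hK
      simp only [Finset.mem_powerset] at hK
      rw [Finset.sdiff_sdiff_eq_self hK]
  rw [hre, Ppoly, Finset.mul_sum]
  refine Finset.sum_congr rfl fun K hK => ?_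
  simp only [Finset.mem_powerset] at hK
  have hcardK : K.card ≤ ℓ - 1 := hcardS ▸ Finset.card_le_card hK
  have hcard : (S \ K).card = (ℓ - 1) - K.card := by
    rw [Finset.card_sdiff_of_subset hK, hcardS]
  have hsum : aInt ℓ ε (S \ K) + aInt ℓ ε K = aInt ℓ ε S := Finset.sum_sdiff hK
  rw [descPoly_inv ℓ q hq K hK]
  have hqe : (q ^ Nlt ℓ)⁻¹ * ((q⁻¹) ^ (-(aInt ℓ ε (S \ K)))) = q ^ e * q ^ (-(aInt ℓ ε K)) := by
    rw [inv_zpow, ← zpow_neg, neg_neg, ← zpow_natCast q (Nlt ℓ), ← zpow_neg,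
      ← zpow_add₀ hq, ← zpow_add₀ hq]
    congr 1
    omega
  have hTe : ((T⁻¹ : ℚ)) ^ ((S \ K).card) = T ^ (1 - (ℓ : ℤ)) * T ^ (K.card) := by
    rw [hcard, inv_pow, ← zpow_natCast T ((ℓ - 1) - K.card), ← zpow_neg,
      ← zpow_natCast T K.card, ← zpow_add₀ hT]
    congr 1
    omega
  calc (q ^ Nlt ℓ)⁻¹ * descPoly ℓ K q * (q⁻¹) ^ (-(aInt ℓ ε (S \ K))) * (T⁻¹) ^ (S \ K).card
      = descPoly ℓ K q * ((q ^ Nlt ℓ)⁻¹ * ((q⁻¹) ^ (-(aInt ℓ ε (S \ K)))))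
          * ((T⁻¹) ^ (S \ K).card) := by ring
    _ = descPoly ℓ K q * (q ^ e * q ^ (-(aInt ℓ ε K))) * (T ^ (1 - (ℓ : ℤ)) * T ^ K.card) := by
        rw [hqe, hTe]
    _ = T ^ (1 - (ℓ : ℤ)) * q ^ e * (descPoly ℓ K q * q ^ (-(aInt ℓ ε K)) * T ^ K.card) := by
        ring
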